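/- Let x₁, z ~ N(0,1) be independent, and define f(t) = E[(x₁ z) tanh(t x₁ z)] for t ≥ 0. Then for 0 ≤ t ≤ 1/2: f(t) ≥ t E[(x₁ z)²] − (t³/3) E[(x₁ z)⁴] = t(1 − 3t²). -/

import Mathlib

open MeasureTheory ProbabilityTheory

open Real

lemma sinh_le_mul_cosh {u : ℝ} (hu : 0 ≤ u) : Real.sinh u ≤ u * Real.cosh u := by
  have h : MonotoneOn (fun u : ℝ => u * Real.cosh u - Real.sinh u) (Set.Ici 0) := by
    have hd : ∀ x : ℝ, HasDerivAt (fun u : ℝ => u * Real.cosh u - Real.sinh u)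
        (x * Real.sinh x) x := by
      intro x
      have := ((hasDerivAt_id x).mul (Real.hasDerivAt_cosh x)).sub (Real.hasDerivAt_sinh x)
      refine this.congr_deriv ?_; simp [id]
    apply monotoneOn_of_deriv_nonneg (convex_Ici 0)
    · exact (Continuous.sub (continuous_id.mul Real.continuous_cosh) Real.continuous_sinh).continuousOn
    · intro x hx
      exact (hd x).differentiableAt.differentiableWithinAt
    · intro x hx
      rw [(hd x).deriv]
      simp only [interior_Ici, Set.mem_Ioi] at hx
      exact mul_nonneg hx.le (Real.sinh_pos_iff.mpr hx).le
  have h2 := h Set.self_mem_Ici hu hu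
  simp only [Real.cosh_zero, Real.sinh_zero, mul_one, zero_mul, sub_zero] at h2
  linarith [h2]

lemma taylor_le_tanh {u : ℝ} (hu : 0 ≤ u) : u - u ^ 3 / 3 ≤ Real.tanh u := by
  have h : MonotoneOn (fun u : ℝ => Real.sinh u - (u - u ^ 3 / 3) * Real.cosh u) (Set.Ici 0) := by
    have hd : ∀ x : ℝ, HasDerivAt (fun u : ℝ => Real.sinh u - (u - u ^ 3 / 3) * Real.cosh u)
        (x ^ 2 * Real.cosh x - (x - x ^ 3 / 3) * Real.sinh x) x := by
      intro x
      have h1 : HasDerivAt (fun u : ℝ => u - u ^ 3 / 3) (1 - x ^ 2) x := by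
        have := ((hasDerivAt_id x).sub ((hasDerivAt_pow 3 x).div_const 3))
        refine this.congr_deriv ?_; push_cast; ring
      have := (Real.hasDerivAt_sinh x).sub ((h1.mul (Real.hasDerivAt_cosh x)))
      refine this.congr_deriv ?_; ring
    apply monotoneOn_of_deriv_nonneg (convex_Ici 0)
    · exact (Real.continuous_sinh.sub (Continuous.mul (by continuity) Real.continuous_cosh)).continuousOn
    · intro x hx
      exact (hd x).differentiableAt.differentiableWithinAt
    · intro x hx
      rw [(hd x).deriv]
      simp only [interior_Ici, Set.mem_Ioi] at hx
      have h2 : Real.sinh x ≤ x * Real.cosh x := sinh_le_mul_cosh hx.le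
      have h3 : 0 ≤ Real.sinh x := (Real.sinh_pos_iff.mpr hx).le
      have h4 : x * Real.sinh x ≤ x * (x * Real.cosh x) := mul_le_mul_of_nonneg_left h2 hx.le
      nlinarith [mul_nonneg (mul_nonneg hx.le (mul_nonneg hx.le hx.le)) h3]
  have h2 := h Set.self_mem_Ici hu hu
  simp only [Real.sinh_zero, Real.cosh_zero, mul_one, zero_sub, sub_zero] at h2
  have hc := Real.cosh_pos u
  rw [Real.tanh_eq_sinh_div_cosh, le_div_iff₀ hc]
  norm_num at h2
  linarith [h2]

lemma sq_sub_le_mul_tanh (u : ℝ) : u ^ 2 - u ^ 4 / 3 ≤ u * Real.tanh u := by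
  rcases le_total 0 u with hu | hu
  · have := taylor_le_tanh hu
    nlinarith
  · have := taylor_le_tanh (neg_nonneg.mpr hu)
    rw [Real.tanh_neg] at this
    nlinarith

open Real MeasureTheory Filter ProbabilityTheory

lemma intble_pow_gauss (k : ℕ) :
    Integrable (fun x : ℝ => x ^ k * Real.exp (-x ^ 2 / 2)) := by
  have h := integrable_rpow_mul_exp_neg_mul_sq (b := 1/2) (by norm_num) (s := k)
    (lt_of_lt_of_le neg_one_lt_zero (Nat.cast_nonneg k))
  refine h.congr (Filter.Eventually.of_forall fun x => ?_)
  simp only [Real.rpow_natCast]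
  ring_nf

lemma tendsto_pow_gauss (m : ℕ) :
    Tendsto (fun x : ℝ => x ^ m * Real.exp (-x ^ 2 / 2)) atTop (nhds 0) := by
  have h := rpow_mul_exp_neg_mul_sq_isLittleO_exp_neg (b := 1/2) (by norm_num) (m : ℝ)
  have h2 : Tendsto (fun x : ℝ => Real.exp (-(1/2) * x)) atTop (nhds 0) :=
    Real.tendsto_exp_atBot.comp
      (tendsto_id.const_mul_atTop_of_neg (by norm_num : (-(1/2):ℝ) < 0))
  have h3 := h.tendsto_zero_of_tendsto h2
  refine h3.congr (fun x => ?_)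
  simp only [Real.rpow_natCast]
  ring_nf

lemma gauss_ibp (k : ℕ) :
    ∫ x : ℝ, x ^ (k + 2) * Real.exp (-x ^ 2 / 2)
      = (k + 1 : ℝ) * ∫ x : ℝ, x ^ k * Real.exp (-x ^ 2 / 2) := by
  set f' : ℝ → ℝ := fun x => x ^ (k + 2) * Real.exp (-x ^ 2 / 2)
      - (k + 1 : ℝ) * (x ^ k * Real.exp (-x ^ 2 / 2)) with hf'
  set F : ℝ → ℝ := fun x => -(x ^ (k + 1) * Real.exp (-x ^ 2 / 2)) with hF
  have hd : ∀ x : ℝ, HasDerivAt F (f' x) x := by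
    intro x
    have hE : HasDerivAt (fun y : ℝ => Real.exp (-y ^ 2 / 2)) (-x * Real.exp (-x ^ 2 / 2)) x := by
      have h1 : HasDerivAt (fun y : ℝ => -y ^ 2 / 2) (-x) x := by
        have := ((hasDerivAt_pow 2 x).neg).div_const 2
        refine this.congr_deriv ?_; push_cast; ring
      convert h1.exp using 1; ring
    have := ((hasDerivAt_pow (k + 1) x).mul hE).neg
    refine this.congr_deriv ?_
    simp only [hf']
    push_cast
    ring
  have hint : Integrable f' := (intble_pow_gauss (k + 2)).sub ((intble_pow_gauss k).const_mul _)
  have htop : Filter.Tendsto F Filter.atTop (nhds 0) := by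
    have := (tendsto_pow_gauss (k + 1)).neg
    rwa [neg_zero] at this
  have hbot : Filter.Tendsto F Filter.atBot (nhds 0) := by
    have h1 : Filter.Tendsto (fun x : ℝ => (-1 : ℝ) ^ k * (x ^ (k + 1) * Real.exp (-x ^ 2 / 2)))
        Filter.atTop (nhds ((-1 : ℝ) ^ k * 0)) := (tendsto_pow_gauss (k + 1)).const_mul _
    rw [mul_zero] at h1
    have h2 := h1.comp tendsto_neg_atBot_atTop
    refine h2.congr fun x => ?_
    have hodd : ((-1 : ℝ)) ^ k * ((-1 : ℝ) ^ (k + 1)) = -1 := by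
      rw [← pow_add]
      exact Odd.neg_one_pow ⟨k, by ring⟩
    show (-1 : ℝ) ^ k * ((-x) ^ (k + 1) * Real.exp (-(-x) ^ 2 / 2)) = F x
    rw [hF, neg_pow (R := ℝ) x (k + 1), neg_sq]
    linear_combination (x ^ (k + 1) * Real.exp (-x ^ 2 / 2)) * hodd
  have hIoi : ∫ x in Set.Ioi (0 : ℝ), f' x = 0 - F 0 :=
    integral_Ioi_of_hasDerivAt_of_tendsto' (fun x _ => hd x) hint.integrableOn htop
  have hIic : ∫ x in Set.Iic (0 : ℝ), f' x = F 0 - 0 :=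
    integral_Iic_of_hasDerivAt_of_tendsto' (fun x _ => hd x) hint.integrableOn hbot
  have hall : ∫ x : ℝ, f' x = 0 := by
    rw [← intervalIntegral.integral_Iic_add_Ioi hint.integrableOn hint.integrableOn, hIoi, hIic]
    ring
  rw [hf'] at hall
  rw [integral_sub (intble_pow_gauss (k + 2)) ((intble_pow_gauss k).const_mul _),
    integral_const_mul] at hall
  linarith [hall]

lemma gauss_exp_int : ∫ x : ℝ, Real.exp (-x ^ 2 / 2) = Real.sqrt (2 * Real.pi) := by
  have := integral_gaussian (1/2)
  rw [show Real.pi / (1/2) = 2 * Real.pi by ring] at this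
  rw [← this]
  congr 1 with x
  ring_nf

lemma gauss_sq_int : ∫ x : ℝ, x ^ 2 * Real.exp (-x ^ 2 / 2) = Real.sqrt (2 * Real.pi) := by
  have h := gauss_ibp 0
  simp only [Nat.cast_zero, zero_add, pow_zero, one_mul] at h
  rw [h, gauss_exp_int]

lemma gauss_pow4_int : ∫ x : ℝ, x ^ 4 * Real.exp (-x ^ 2 / 2) = 3 * Real.sqrt (2 * Real.pi) := by
  have h := gauss_ibp 2
  norm_num at h
  rw [h, gauss_sq_int]

lemma gaussianPDFReal_zero_one (x : ℝ) :
    gaussianPDFReal 0 1 x = (Real.sqrt (2 * Real.pi))⁻¹ * Real.exp (-x ^ 2 / 2) := by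
  simp [gaussianPDFReal]

lemma integral_gaussianReal_eq (f : ℝ → ℝ) :
    ∫ x, f x ∂(gaussianReal 0 1) = ∫ x, gaussianPDFReal 0 1 x * f x := by
  rw [gaussianReal_of_var_ne_zero 0 one_ne_zero]
  have hm : Measurable (fun x => (gaussianPDFReal 0 1 x).toNNReal) :=
    (measurable_gaussianPDFReal 0 1).real_toNNReal
  rw [show gaussianPDF 0 1 = fun x => ((gaussianPDFReal 0 1 x).toNNReal : ENNReal) by
      funext x; rw [gaussianPDF]; rfl]
  rw [integral_withDensity_eq_integral_smul hm]
  congr 1 with x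
  simp [NNReal.smul_def, Real.coe_toNNReal _ (gaussianPDFReal_nonneg 0 1 x)]

lemma integrable_gaussianReal_iff (f : ℝ → ℝ) :
    Integrable f (gaussianReal 0 1) ↔
      Integrable (fun x => gaussianPDFReal 0 1 x * f x) volume := by
  rw [gaussianReal_of_var_ne_zero 0 one_ne_zero]
  have hm : Measurable (fun x => (gaussianPDFReal 0 1 x).toNNReal) :=
    (measurable_gaussianPDFReal 0 1).real_toNNReal
  rw [show gaussianPDF 0 1 = fun x => ((gaussianPDFReal 0 1 x).toNNReal : ENNReal) by
      funext x; rw [gaussianPDF]; rfl]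
  rw [integrable_withDensity_iff_integrable_smul hm]
  constructor <;> intro h <;> refine h.congr (Filter.Eventually.of_forall fun x => ?_) <;>
    simp [NNReal.smul_def, Real.coe_toNNReal _ (gaussianPDFReal_nonneg 0 1 x)]

lemma integrable_pow_gaussReal (k : ℕ) :
    Integrable (fun x : ℝ => x ^ k) (gaussianReal 0 1) := by
  rw [integrable_gaussianReal_iff]
  refine (((intble_pow_gauss k).const_mul ((Real.sqrt (2 * Real.pi))⁻¹)).congr
    (Filter.Eventually.of_forall fun x => ?_))
  simp only [gaussianPDFReal_zero_one]
  ring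

lemma integrable_abs_gaussReal :
    Integrable (fun x : ℝ => |x|) (gaussianReal 0 1) := by
  rw [integrable_gaussianReal_iff]
  refine ((((intble_pow_gauss 1).abs).const_mul ((Real.sqrt (2 * Real.pi))⁻¹)).congr
    (Filter.Eventually.of_forall fun x => ?_))
  simp only [gaussianPDFReal_zero_one, abs_mul, abs_of_pos (Real.exp_pos _), pow_one]
  ring

lemma moment_gaussReal (k : ℕ) :
    ∫ x, x ^ k ∂(gaussianReal 0 1)
      = (Real.sqrt (2 * Real.pi))⁻¹ * ∫ x : ℝ, x ^ k * Real.exp (-x ^ 2 / 2) := by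
  rw [integral_gaussianReal_eq, ← integral_const_mul]
  congr 1 with x
  rw [gaussianPDFReal_zero_one]
  ring

lemma sqrt_two_pi_pos : (0 : ℝ) < Real.sqrt (2 * Real.pi) :=
  Real.sqrt_pos.mpr (by positivity)

lemma moment2_gaussReal : ∫ x, x ^ 2 ∂(gaussianReal 0 1) = 1 := by
  rw [moment_gaussReal, gauss_sq_int, inv_mul_cancel₀ sqrt_two_pi_pos.ne']

lemma moment4_gaussReal : ∫ x, x ^ 4 ∂(gaussianReal 0 1) = 3 := by
  rw [moment_gaussReal, gauss_pow4_int]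
  field_simp

lemma abs_tanh_le_one (x : ℝ) : |Real.tanh x| ≤ 1 := by
  rw [Real.tanh_eq_sinh_div_cosh, abs_div, abs_of_pos (Real.cosh_pos x),
    div_le_one (Real.cosh_pos x), Real.abs_sinh]
  calc Real.sinh |x| ≤ Real.cosh |x| := (Real.sinh_lt_cosh _).le
  _ = Real.cosh x := Real.cosh_abs x

lemma continuous_tanh' : Continuous Real.tanh := by
  rw [show Real.tanh = fun x => Real.sinh x / Real.cosh x from funext Real.tanh_eq_sinh_div_cosh]
  exact Real.continuous_sinh.div Real.continuous_cosh fun x => (Real.cosh_pos x).ne'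

theorem product_tanh_lower (t : ℝ) (h0 : 0 ≤ t) (h1 : t ≤ 1 / 2) :
    t * (1 - 3 * t ^ 2)
      ≤ ∫ p : ℝ × ℝ, p.1 * p.2 * Real.tanh (t * p.1 * p.2)
          ∂((gaussianReal 0 1).prod (gaussianReal 0 1)) := by
  rcases eq_or_lt_of_le h0 with rfl | ht
  · simp
  set ν := (gaussianReal 0 1).prod (gaussianReal 0 1)
  have int2 := integrable_pow_gaussReal 2
  have int4 := integrable_pow_gaussReal 4
  have hgint : Integrable
      (fun p : ℝ × ℝ => t * (p.1 ^ 2 * p.2 ^ 2) - t ^ 3 / 3 * (p.1 ^ 4 * p.2 ^ 4)) ν :=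
    ((int2.mul_prod int2).const_mul t).sub ((int4.mul_prod int4).const_mul (t ^ 3 / 3))
  have hhint : Integrable (fun p : ℝ × ℝ => p.1 * p.2 * Real.tanh (t * p.1 * p.2)) ν := by
    refine Integrable.mono' (integrable_abs_gaussReal.mul_prod integrable_abs_gaussReal) ?_
      (Filter.Eventually.of_forall fun p => ?_)
    · exact ((continuous_fst.mul continuous_snd).mul (continuous_tanh'.comp
        ((continuous_const.mul continuous_fst).mul continuous_snd))).aestronglyMeasurable
    · rw [Real.norm_eq_abs, abs_mul, abs_mul]
      calc |p.1| * |p.2| * |Real.tanh (t * p.1 * p.2)| ≤ |p.1| * |p.2| * 1 := by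
            gcongr; exact abs_tanh_le_one _
      _ = |p.1| * |p.2| := mul_one _
  have hpt : ∀ p : ℝ × ℝ,
      t * (p.1 ^ 2 * p.2 ^ 2) - t ^ 3 / 3 * (p.1 ^ 4 * p.2 ^ 4)
        ≤ p.1 * p.2 * Real.tanh (t * p.1 * p.2) := by
    intro p
    have key := sq_sub_le_mul_tanh (t * p.1 * p.2)
    refine le_of_mul_le_mul_left ?_ ht
    have e1 : t * (t * (p.1 ^ 2 * p.2 ^ 2) - t ^ 3 / 3 * (p.1 ^ 4 * p.2 ^ 4))
        = (t * p.1 * p.2) ^ 2 - (t * p.1 * p.2) ^ 4 / 3 := by ring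
    have e2 : t * (p.1 * p.2 * Real.tanh (t * p.1 * p.2))
        = (t * p.1 * p.2) * Real.tanh (t * p.1 * p.2) := by ring
    rw [e1, e2]
    exact key
  have hmono := integral_mono hgint hhint hpt
  refine le_trans (le_of_eq ?_) hmono
  rw [integral_sub ((int2.mul_prod int2).const_mul t) ((int4.mul_prod int4).const_mul (t ^ 3 / 3)),
    integral_const_mul, integral_const_mul, integral_prod_mul (f := fun x : ℝ => x ^ 2) (g := fun x : ℝ => x ^ 2),
    integral_prod_mul (f := fun x : ℝ => x ^ 4) (g := fun x : ℝ => x ^ 4),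
    moment2_gaussReal, moment4_gaussReal]
  ring
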